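/- Let 𝔽_q be a finite field of odd characteristic, let f ∈ 𝔽_q[X] be a polynomial of degree d > 0 with gcd(d, q) = 1 such that f(−X) = −f(X) as polynomials, and let b ∈ 𝔽_q with b ≠ 0. Then the bivariate polynomial f(x + y) + f(x) + b ∈ 𝔽_q[x,y] is absolutely irreducible, i.e. its image in K[x,y] is irreducible for K the algebraic closure of 𝔽_q. -/

import Mathlib

open Polynomial

namespace OddPolyAux

variable {L : Type*} [Field L]



lemma coeff_comp_neg_X (p : L[X]) (k : ℕ) :
    (p.comp (-X)).coeff k = (-1)^k * p.coeff k := by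
  induction p using Polynomial.induction_on' with
  | add p q hp hq => simp [add_comp, hp, hq, mul_add]
  | monomial n a =>
    rw [monomial_comp, neg_pow (X : L[X]) n]
    rw [← mul_assoc, mul_comm (C a), mul_assoc, ← C_1, ← C_neg, ← C_pow,
      coeff_C_mul, coeff_C_mul, coeff_X_pow, coeff_monomial]
    rcases eq_or_ne k n with rfl | h
    · simp
    · simp [h, Ne.symm h]

lemma even_coeff_eq_zero (h2 : (2:L) ≠ 0) {g : L[X]} (hodd : g.comp (-X) = -g)
    {k : ℕ} (hk : Even k) : g.coeff k = 0 := by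
  have := coeff_comp_neg_X g k
  rw [hodd, coeff_neg, hk.neg_one_pow, one_mul] at this
  have h : (2:L) * g.coeff k = 0 := by linear_combination -this
  rcases mul_eq_zero.1 h with h | h
  · exact absurd h h2
  · exact h

/-- irreducibility of a constant polynomial with irreducible "constant" -/
lemma irreducible_C_of_irreducible {R : Type*} [CommRing R] [IsDomain R] {p : R}
    (hp : Irreducible p) : Irreducible (C p : R[X]) := by
  constructor
  · rw [isUnit_C]; exact hp.not_isUnit
  · intro P Q hPQ
    have hCp : (C p : R[X]) ≠ 0 := by simpa using hp.ne_zero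
    have hP : P ≠ 0 := fun h => hCp (by rw [hPQ, h, zero_mul])
    have hQ : Q ≠ 0 := fun h => hCp (by rw [hPQ, h, mul_zero])
    have hdeg : P.natDegree + Q.natDegree = 0 := by
      rw [← natDegree_mul hP hQ, ← hPQ, natDegree_C]
    obtain ⟨u, hu⟩ := Polynomial.natDegree_eq_zero.1 (Nat.eq_zero_of_add_eq_zero_right hdeg)
    obtain ⟨v, hv⟩ := Polynomial.natDegree_eq_zero.1 (Nat.eq_zero_of_add_eq_zero_left hdeg)
    have : C p = C (u * v) := by rw [C_mul, hu, hv, hPQ]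
    rcases hp.isUnit_or_isUnit (C_injective this) with h | h
    · exact Or.inl (hu ▸ isUnit_C.2 h)
    · exact Or.inr (hv ▸ isUnit_C.2 h)

/-- The key elementary criterion: `F ∈ L[w][z]` with `F(0,z) = b ≠ 0` and leading
`z`-coefficient `c·w` is irreducible. -/
lemma key (F : (Polynomial L)[X]) (b : L) (hb : b ≠ 0) (c : L) (hc : c ≠ 0)
    (h0 : F.map (evalRingHom (0:L)) = C b)
    (hlc : F.leadingCoeff = C c * X)
    (hdeg : 0 < F.natDegree) : Irreducible F := by
  have hCcX : (C c * X : Polynomial L) ≠ 0 := by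
    simp [hc]
  have hF0 : F ≠ 0 := fun h => by rw [h] at hlc; exact hCcX (by simpa using hlc.symm)
  -- helper: a degree-0 factor is a unit
  have unit_of_deg0 : ∀ P Q : (Polynomial L)[X], F = P * Q → P.natDegree = 0 → IsUnit P := by
    intro P Q hPQ hP0
    obtain ⟨p₀, hp₀⟩ := Polynomial.natDegree_eq_zero.1 hP0
    have hP : P ≠ 0 := fun h => hF0 (by rw [hPQ, h, zero_mul])
    have hQ : Q ≠ 0 := fun h => hF0 (by rw [hPQ, h, mul_zero])
    have hp₀0 : p₀ ≠ 0 := fun h => hP (by rw [← hp₀, h, C_0])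
    -- eval 0 p₀ ≠ 0
    have hev : eval 0 p₀ ≠ 0 := by
      intro h
      have h1 : eval 0 (F.coeff 0) = b := by
        have := congrArg (fun q => q.coeff 0) h0
        simpa [coeff_map] using this
      rw [hPQ, mul_coeff_zero, ← hp₀] at h1
      have h1' : eval 0 p₀ * eval 0 (Q.coeff 0) = b := by
        rw [eval_mul] at h1; simpa using h1
      rw [h, zero_mul] at h1'
      exact hb h1'.symm
    -- p₀ divides C c * X via leading coefficients
    have hlcm : p₀ * Q.leadingCoeff = C c * X := by
      rw [← hlc, hPQ, leadingCoeff_mul, ← hp₀, leadingCoeff_C]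
    have hQl : Q.leadingCoeff ≠ 0 := leadingCoeff_ne_zero.2 hQ
    have hdegs : p₀.natDegree + Q.leadingCoeff.natDegree = 1 := by
      rw [← natDegree_mul hp₀0 hQl, hlcm]
      simp [natDegree_C_mul_X c hc]
    rcases Nat.eq_zero_or_pos p₀.natDegree with h1 | h1
    · obtain ⟨u, hu⟩ := Polynomial.natDegree_eq_zero.1 h1
      have hu0 : u ≠ 0 := fun h => hp₀0 (by rw [← hu, h, C_0])
      rw [← hp₀, ← hu, isUnit_C, isUnit_C]
      exact (isUnit_iff_ne_zero.2 hu0)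
    · -- then Q.leadingCoeff has natDegree 0, eval at 0 gives contradiction
      exfalso
      have h2 : Q.leadingCoeff.natDegree = 0 := by omega
      obtain ⟨e, he⟩ := Polynomial.natDegree_eq_zero.1 h2
      have he0 : e ≠ 0 := fun h => hQl (by rw [← he, h, C_0])
      have := congrArg (eval 0) hlcm
      rw [eval_mul, ← he, eval_C, eval_mul, eval_C, eval_X, mul_zero] at this
      exact he0 (by
        rcases mul_eq_zero.1 this with h | h
        · exact absurd h hev
        · exact h)
  constructor
  · exact not_isUnit_of_natDegree_pos F hdeg
  · intro P Q hPQ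
    rcases Nat.eq_zero_or_pos P.natDegree with hP0 | hP1
    · exact Or.inl (unit_of_deg0 P Q hPQ hP0)
    rcases Nat.eq_zero_or_pos Q.natDegree with hQ0 | hQ1
    · exact Or.inr (unit_of_deg0 Q P (by rw [hPQ, mul_comm]) hQ0)
    exfalso
    -- both leading coefficients are divisible by X=w
    have hP : P ≠ 0 := fun h => hF0 (by rw [hPQ, h, zero_mul])
    have hQ : Q ≠ 0 := fun h => hF0 (by rw [hPQ, h, mul_zero])
    have hmap : ∀ (G H : (Polynomial L)[X]), F = G * H → 0 < G.natDegree →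
        (X : Polynomial L) ∣ G.leadingCoeff := by
      intro G H hGH hG1
      have hGm : IsUnit (G.map (evalRingHom (0:L))) := by
        have : G.map (evalRingHom (0:L)) * H.map (evalRingHom (0:L)) = C b := by
          rw [← Polynomial.map_mul, ← hGH, h0]
        exact isUnit_of_mul_isUnit_left (this ▸ (isUnit_C.2 (isUnit_iff_ne_zero.2 hb)))
      have hd0 : (G.map (evalRingHom (0:L))).natDegree = 0 := natDegree_eq_zero_of_isUnit hGm
      have : (G.map (evalRingHom (0:L))).coeff G.natDegree = 0 :=
        coeff_eq_zero_of_natDegree_lt (by omega)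
      rw [coeff_map] at this
      rw [X_dvd_iff, coeff_zero_eq_eval_zero]
      exact this
    have h1 : (X : Polynomial L) ∣ P.leadingCoeff := hmap P Q hPQ hP1
    have h2 : (X : Polynomial L) ∣ Q.leadingCoeff := hmap Q P (by rw [hPQ, mul_comm]) hQ1
    have hdvd : (X * X : Polynomial L) ∣ C c * X := by
      rw [← hlc, hPQ, leadingCoeff_mul]
      exact mul_dvd_mul h1 h2
    have := Polynomial.natDegree_le_of_dvd hdvd hCcX
    rw [natDegree_mul (X_ne_zero) (X_ne_zero), natDegree_X, natDegree_C_mul_X c hc] at this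
    omega


lemma coeff_aeval_linear (g : L[X]) (bb a : L[X]) (k : ℕ) :
    (aeval (C bb * (X + C a)) g).coeff k
      = ∑ i ∈ Finset.range (g.natDegree + 1),
          g.coeff i • (bb ^ i * (a ^ (i - k) * (i.choose k : L[X]))) := by
  rw [aeval_eq_sum_range, finset_sum_coeff]
  refine Finset.sum_congr rfl fun i _ => ?_
  rw [coeff_smul, mul_pow, ← C_pow, coeff_C_mul, coeff_X_add_C_pow]

lemma coeff_aeval_linear_top (g : L[X]) (bb a : L[X]) :
    (aeval (C bb * (X + C a)) g).coeff g.natDegree = g.leadingCoeff • bb ^ g.natDegree := by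
  rw [coeff_aeval_linear]
  rw [Finset.sum_eq_single g.natDegree]
  · rw [Nat.sub_self, pow_zero, Nat.choose_self, Nat.cast_one, one_mul, mul_one, leadingCoeff]
  · intro i hi hne
    have : i < g.natDegree := by
      simp only [Finset.mem_range] at hi; omega
    rw [Nat.choose_eq_zero_of_lt this]
    simp
  · intro h
    exact absurd (Finset.self_mem_range_succ g.natDegree) h

lemma coeff_aeval_linear_subtop (g : L[X]) (bb a : L[X]) (hd : 2 ≤ g.natDegree) :
    (aeval (C bb * (X + C a)) g).coeff (g.natDegree - 1)
      = g.coeff (g.natDegree - 1) • bb ^ (g.natDegree - 1)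
        + g.leadingCoeff • (bb ^ g.natDegree * a * (g.natDegree : L[X])) := by
  obtain ⟨m, hm⟩ : ∃ m, g.natDegree = m + 2 := ⟨g.natDegree - 2, by omega⟩
  rw [coeff_aeval_linear, hm]
  have h1 : m + 2 + 1 = (m + 1) + 1 + 1 := by omega
  rw [h1, Finset.sum_range_succ, Finset.sum_range_succ]
  have h2 : ∑ i ∈ Finset.range (m + 1),
      g.coeff i • (bb ^ i * (a ^ (i - (m + 2 - 1)) * (i.choose (m + 2 - 1) : L[X]))) = 0 := by
    refine Finset.sum_eq_zero fun i hi => ?_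
    simp only [Finset.mem_range] at hi
    rw [Nat.choose_eq_zero_of_lt (by omega)]
    simp
  rw [h2, zero_add]
  have h3 : m + 2 - 1 = m + 1 := by omega
  rw [h3]
  have h4 : (m + 1) - (m + 1) = 0 := by omega
  have h5 : (m + 2) - (m + 1) = 1 := by omega
  rw [h4, h5, Nat.choose_self, Nat.choose_succ_self_right]
  simp only [pow_zero, pow_one, Nat.cast_one, mul_one, one_mul, leadingCoeff, hm]
  push_cast
  ring_nf

lemma coeff_aeval_linear_above (g : L[X]) (bb a : L[X]) {k : ℕ} (hk : g.natDegree < k) :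
    (aeval (C bb * (X + C a)) g).coeff k = 0 := by
  rw [coeff_aeval_linear]
  refine Finset.sum_eq_zero fun i hi => ?_
  simp only [Finset.mem_range] at hi
  rw [Nat.choose_eq_zero_of_lt (by omega)]
  simp

theorem tilde_irreducible (g : L[X]) (hd : 0 < g.natDegree) (hdL : ((g.natDegree : L)) ≠ 0)
    (h2 : (2:L) ≠ 0) (hodd : g.comp (-X) = -g) (b : L) (hb : b ≠ 0) :
    Irreducible (aeval (C (C (2⁻¹:L)) * (X + C (X:L[X]))) g
      + aeval (C (-(C (2⁻¹:L))) * (X + C (-(X:L[X])))) g + C (C b) : (Polynomial L)[X]) := by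
  have hgne : g ≠ 0 := fun h => by simp [h] at hd
  have hlcne : g.leadingCoeff ≠ 0 := leadingCoeff_ne_zero.2 hgne
  have hdodd : Odd g.natDegree := by
    rcases Nat.even_or_odd g.natDegree with he | ho
    · exact absurd (even_coeff_eq_zero h2 hodd he) hlcne
    · exact ho
  set α : (Polynomial L)[X] := C (C (2⁻¹:L)) * (X + C (X:L[X])) with hα
  set β : (Polynomial L)[X] := C (-(C (2⁻¹:L))) * (X + C (-(X:L[X]))) with hβ
  set F : (Polynomial L)[X] := aeval α g + aeval β g + C (C b) with hF
  -- the evaluation at w = 0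
  have hoddeval : ∀ {A : Type _} [CommRing A] [Algebra L A] (t : A),
      aeval (-t) g = - aeval t g := by
    intro A _ _ t
    have h1 : aeval t (g.comp (-X)) = aeval (-t) g := by
      rw [aeval_comp, map_neg, aeval_X]
    rw [hodd, map_neg] at h1
    exact h1.symm
  have h0 : F.map (evalRingHom (0:L)) = C b := by
    have hcoe : evalRingHom (0:L) = ((aeval (0:L) : L[X] →ₐ[L] L) : L[X] →+* L) :=
      (coe_aeval_eq_evalRingHom 0).symm
    rw [hcoe]
    have : F.map ((aeval (0:L) : L[X] →ₐ[L] L) : L[X] →+* L)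
        = (mapAlgHom (aeval (0:L) : L[X] →ₐ[L] L)) F := rfl
    rw [this, hF]
    set Φ := mapAlgHom (aeval (0:L) : L[X] →ₐ[L] L)
    rw [map_add, map_add, ← aeval_algHom_apply, ← aeval_algHom_apply]
    have hΦα : Φ α = C (2⁻¹:L) * X := by
      show (α.map _) = _
      rw [hα]
      simp
    have hΦβ : Φ β = -(C (2⁻¹:L) * X) := by
      show (β.map _) = _
      rw [hβ]
      simp
    have hΦC : Φ (C (C b)) = C b := by
      show ((C (C b)).map _) = _
      simp
    rw [hΦα, hΦβ, hΦC, hoddeval]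
    ring
  rcases eq_or_lt_of_le (show 1 ≤ g.natDegree from hd) with hd1 | hd2
  · -- degree one case
    have hg1 : g.natDegree = 1 := hd1.symm
    have hg0 : g.coeff 0 = 0 := even_coeff_eq_zero h2 hodd Even.zero
    have ha1 : g.coeff 1 ≠ 0 := by
      have := hlcne
      rwa [leadingCoeff, hg1] at this
    have hgform : g = C (g.coeff 1) * X := by
      have := eq_X_add_C_of_natDegree_le_one (le_of_eq hg1)
      rw [hg0, C_0, add_zero] at this
      exact this
    have h2cast : ((2:(Polynomial L)[X])) = C (C (2:L)) := by
      simp only [map_ofNat]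
    have h2inv : (2:(Polynomial L)[X]) * C (C (2⁻¹:L)) = 1 := by
      rw [h2cast, ← map_mul, ← map_mul, mul_inv_cancel₀ h2, map_one, map_one]
    have hFC : F = C (C (g.coeff 1) * X + C b) := by
      rw [hF, hα, hβ]
      nth_rewrite 1 [hgform]
      nth_rewrite 2 [hgform]
      rw [map_mul, map_mul, aeval_X, aeval_X, aeval_C, aeval_C,
        Polynomial.algebraMap_apply, Polynomial.algebraMap_apply, map_add, map_mul]
      rw [Algebra.algebraMap_self, RingHom.id_apply, map_neg, map_neg]
      linear_combination (C (C (g.coeff 1)) * C (X:L[X])) * h2inv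
    rw [hFC]
    exact irreducible_C_of_irreducible
      (Polynomial.irreducible_of_degree_eq_one (degree_linear ha1))
  · -- degree ≥ 3 (in fact ≥ 2) case
    have hd2' : 2 ≤ g.natDegree := hd2
    have hsubeven : Even (g.natDegree - 1) := Nat.Odd.sub_odd hdodd odd_one
    have hcoeffsub : g.coeff (g.natDegree - 1) = 0 := even_coeff_eq_zero h2 hodd hsubeven
    set d := g.natDegree with hdd
    set c : L := g.leadingCoeff * ((2:L) * (2⁻¹:L)^d * (d:L)) with hc
    have hcne : c ≠ 0 := by
      apply mul_ne_zero hlcne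
      apply mul_ne_zero (mul_ne_zero h2 (pow_ne_zero _ (inv_ne_zero h2)))
      exact hdL
    -- coefficient at d is zero
    have hcd : F.coeff d = 0 := by
      rw [hF, coeff_add, coeff_add, coeff_aeval_linear_top, coeff_aeval_linear_top,
        coeff_C, if_neg (by omega)]
      rw [Odd.neg_pow hdodd, smul_neg]
      ring
    -- coefficient at d - 1
    have hsub : F.coeff (d-1) = C c * X := by
      rw [hF, coeff_add, coeff_add, coeff_aeval_linear_subtop g _ _ hd2',
        coeff_aeval_linear_subtop g _ _ hd2', coeff_C, if_neg (by omega),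
        hcoeffsub, zero_smul, zero_smul, zero_add, zero_add, add_zero]
      rw [Odd.neg_pow hdodd, smul_eq_C_mul, smul_eq_C_mul]
      rw [hc, map_mul, map_mul, map_mul]
      rw [← C_pow, ← C_eq_natCast, map_ofNat]
      ring
    -- degree of F
    have habove : ∀ N, d < N → F.coeff N = 0 := by
      intro N hN
      rw [hF, coeff_add, coeff_add, coeff_aeval_linear_above g _ _ hN,
        coeff_aeval_linear_above g _ _ hN, coeff_C, if_neg (by omega)]
      ring
    have hCcX : (C c * X : L[X]) ≠ 0 := by simp [hcne]
    have hFne : F ≠ 0 := fun h => hCcX (by rw [← hsub, h, coeff_zero])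
    have hdegle : F.natDegree ≤ d - 1 := by
      rw [natDegree_le_iff_coeff_eq_zero]
      intro N hN
      rcases eq_or_lt_of_le (Nat.succ_le_of_lt hN) with h | h
      · have : N = d := by omega
        rw [this]; exact hcd
      · exact habove N (by omega)
    have hdegge : d - 1 ≤ F.natDegree := le_natDegree_of_ne_zero (by rw [hsub]; exact hCcX)
    have hdegF : F.natDegree = d - 1 := le_antisymm hdegle hdegge
    have hlcF : F.leadingCoeff = C c * X := by rw [leadingCoeff, hdegF, hsub]
    exact key F b hb c hcne h0 hlcF (by omega)

theorem mv_irreducible (g : L[X]) (hd : 0 < g.natDegree) (hdL : ((g.natDegree : L)) ≠ 0)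
    (h2 : (2:L) ≠ 0) (hodd : g.comp (-X) = -g) (b : L) (hb : b ≠ 0) :
    Irreducible (Polynomial.aeval (MvPolynomial.X 0 + MvPolynomial.X 1 : MvPolynomial (Fin 2) L) g
      + Polynomial.aeval (MvPolynomial.X 0 : MvPolynomial (Fin 2) L) g
      + MvPolynomial.C b) := by
  set α : (Polynomial L)[X] := C (C (2⁻¹:L)) * (X + C (X:L[X])) with hα
  set β : (Polynomial L)[X] := C (-(C (2⁻¹:L))) * (X + C (-(X:L[X]))) with hβ
  set σ : MvPolynomial (Fin 2) L →ₐ[L] (Polynomial L)[X] :=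
    MvPolynomial.aeval ![β, X] with hσ
  set τinner : L[X] →ₐ[L] MvPolynomial (Fin 2) L :=
    Polynomial.aeval ((2 : MvPolynomial (Fin 2) L) * MvPolynomial.X 0 + MvPolynomial.X 1)
    with hτi
  set τ : (Polynomial L)[X] →ₐ[L] MvPolynomial (Fin 2) L :=
    Polynomial.aevalTower τinner (MvPolynomial.X 1) with hτ
  have hC2 : MvPolynomial.C (2⁻¹:L) * 2 = (1 : MvPolynomial (Fin 2) L) := by
    have : MvPolynomial.C (2⁻¹:L) * MvPolynomial.C (2:L) = (1 : MvPolynomial (Fin 2) L) := by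
      rw [← map_mul, inv_mul_cancel₀ h2, map_one]
    simpa [map_ofNat] using this
  have hT2 : C (C (2⁻¹:L)) * 2 = (1 : (Polynomial L)[X]) := by
    have : (C (C (2⁻¹:L)) : (Polynomial L)[X]) * C (C (2:L)) = 1 := by
      rw [← map_mul, ← map_mul, inv_mul_cancel₀ h2, map_one, map_one]
    simpa [map_ofNat] using this
  have hσ0 : σ (MvPolynomial.X 0) = β := by
    rw [hσ, MvPolynomial.aeval_X]; rfl
  have hσ1 : σ (MvPolynomial.X 1) = X := by
    rw [hσ, MvPolynomial.aeval_X]; rfl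
  have hτβ : τ β = MvPolynomial.X 0 := by
    rw [hβ, hτ, map_mul, map_add, aevalTower_C, aevalTower_X, aevalTower_C, hτi,
      map_neg, map_neg, aeval_C, aeval_X]
    rw [MvPolynomial.algebraMap_eq]
    linear_combination (MvPolynomial.X 0 : MvPolynomial (Fin 2) L) * hC2
  have hτα : τ α = MvPolynomial.X 0 + MvPolynomial.X 1 := by
    rw [hα, hτ, map_mul, map_add, aevalTower_C, aevalTower_X, aevalTower_C, hτi,
      aeval_C, aeval_X]
    rw [MvPolynomial.algebraMap_eq]
    linear_combination ((MvPolynomial.X 0 : MvPolynomial (Fin 2) L)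
      + MvPolynomial.X 1) * hC2
  have h1 : τ.comp σ = AlgHom.id L (MvPolynomial (Fin 2) L) := by
    apply MvPolynomial.algHom_ext
    intro i
    fin_cases i
    · show τ (σ (MvPolynomial.X 0)) = MvPolynomial.X 0
      rw [hσ0, hτβ]
    · show τ (σ (MvPolynomial.X 1)) = MvPolynomial.X 1
      rw [hσ1, hτ, aevalTower_X]
  have h2' : σ.comp τ = AlgHom.id L ((Polynomial L)[X]) := by
    apply Polynomial.algHom_ext'
    · apply Polynomial.algHom_ext
      show σ (τ (C X)) = C X
      rw [hτ, aevalTower_C, hτi, aeval_X, map_add, map_mul, hσ0, hσ1, map_ofNat, hβ,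
        map_neg, map_neg]
      linear_combination ((C (X:L[X]) : (Polynomial L)[X]) - X) * hT2
    · show σ (τ X) = X
      rw [hτ, aevalTower_X, hσ1]
  set e : (Polynomial L)[X] ≃ₐ[L] MvPolynomial (Fin 2) L :=
    AlgEquiv.ofAlgHom τ σ h1 h2' with he
  have hmain := tilde_irreducible g hd hdL h2 hodd b hb
  have htarget : e (aeval α g + aeval β g + C (C b))
      = Polynomial.aeval (MvPolynomial.X 0 + MvPolynomial.X 1 : MvPolynomial (Fin 2) L) g
        + Polynomial.aeval (MvPolynomial.X 0 : MvPolynomial (Fin 2) L) g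
        + MvPolynomial.C b := by
    have happ : ∀ p, e p = τ p := fun p => rfl
    rw [happ, map_add, map_add, ← aeval_algHom_apply, ← aeval_algHom_apply, hτα, hτβ]
    congr 1
    have : (C (C b) : (Polynomial L)[X]) = algebraMap L _ b := rfl
    rw [this, AlgHom.commutes]
    rfl
  rw [← htarget]
  exact (MulEquiv.irreducible_iff (e : (Polynomial L)[X] ≃* MvPolynomial (Fin 2) L)).2 hmain

end OddPolyAux

namespace OddPolyAux

lemma map_polyaeval {𝔽 L : Type*} [Field 𝔽] [Field L] (φ : 𝔽 →+* L)
    (f : 𝔽[X]) (t : MvPolynomial (Fin 2) 𝔽) :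
    MvPolynomial.map φ (Polynomial.aeval t f)
      = Polynomial.aeval (MvPolynomial.map φ t) (f.map φ) := by
  rw [Polynomial.aeval_def, Polynomial.aeval_def, Polynomial.hom_eval₂, Polynomial.eval₂_map]
  congr 1
  ext a
  simp [MvPolynomial.algebraMap_eq]

end OddPolyAux

/-- For a finite field `𝔽_q` of odd characteristic, an odd polynomial `f`
(`f(-X) = -f(X)`) of degree `d > 0` with `gcd(d, q) = 1`, and `b ≠ 0`, the bivariate
polynomial `f(x+y) + f(x) + b` is absolutely irreducible over the algebraic closure. -/
theorem odd_poly_sum_absolutely_irreducible {𝔽 : Type*} [Field 𝔽] [Fintype 𝔽]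
    (hchar : ringChar 𝔽 ≠ 2)
    (f : Polynomial 𝔽) (hd : 0 < f.natDegree)
    (hcop : Nat.gcd f.natDegree (Fintype.card 𝔽) = 1)
    (hodd : f.comp (-Polynomial.X) = -f)
    (b : 𝔽) (hb : b ≠ 0) :
    Irreducible
      (MvPolynomial.map (algebraMap 𝔽 (AlgebraicClosure 𝔽))
        (Polynomial.aeval
            ((MvPolynomial.X 0 + MvPolynomial.X 1 : MvPolynomial (Fin 2) 𝔽)) f
          + Polynomial.aeval (MvPolynomial.X 0 : MvPolynomial (Fin 2) 𝔽) f
          + MvPolynomial.C b)) := by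
  set L := AlgebraicClosure 𝔽
  set φ : 𝔽 →+* L := algebraMap 𝔽 L with hφ
  have hφinj : Function.Injective φ := φ.injective
  set g : L[X] := f.map φ with hg
  have hdeq : g.natDegree = f.natDegree := natDegree_map_eq_of_injective hφinj f
  -- characteristic facts
  set p := ringChar 𝔽 with hp
  haveI : CharP 𝔽 p := ringChar.charP 𝔽
  haveI : Fact p.Prime := ⟨CharP.char_is_prime 𝔽 p⟩
  have hpprime : p.Prime := Fact.out
  haveI : CharP L p := charP_of_injective_algebraMap hφinj p
  obtain ⟨n, hcard⟩ := FiniteField.card 𝔽 p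
  have hpd : ¬ p ∣ f.natDegree := by
    intro h
    have h1 : p ∣ Nat.gcd f.natDegree (Fintype.card 𝔽) :=
      Nat.dvd_gcd h (by rw [hcard.2]; exact dvd_pow_self p (by exact_mod_cast n.ne_zero))
    rw [hcop] at h1
    exact hpprime.ne_one (Nat.dvd_one.1 h1)
  have hdL : ((g.natDegree : L)) ≠ 0 := by
    rw [hdeq]
    intro h
    exact hpd ((CharP.cast_eq_zero_iff L p f.natDegree).1 h)
  have h2L : (2:L) ≠ 0 := by
    intro h
    have h2 : ((2:ℕ):L) = 0 := by exact_mod_cast h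
    have := (CharP.cast_eq_zero_iff L p 2).1 h2
    rw [Nat.prime_dvd_prime_iff_eq hpprime Nat.prime_two] at this
    exact hchar this
  have hoddg : g.comp (-X) = -g := by
    have : (-X : L[X]) = (-X : 𝔽[X]).map φ := by simp
    rw [hg, this, ← Polynomial.map_comp, hodd, Polynomial.map_neg]
  have hdg : 0 < g.natDegree := by rw [hdeq]; exact hd
  have hbφ : φ b ≠ 0 := fun h => hb (hφinj (by rw [h, map_zero]))
  have htarget : MvPolynomial.map φ
      (Polynomial.aeval ((MvPolynomial.X 0 + MvPolynomial.X 1 : MvPolynomial (Fin 2) 𝔽)) f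
        + Polynomial.aeval (MvPolynomial.X 0 : MvPolynomial (Fin 2) 𝔽) f
        + MvPolynomial.C b)
      = Polynomial.aeval (MvPolynomial.X 0 + MvPolynomial.X 1 : MvPolynomial (Fin 2) L) g
        + Polynomial.aeval (MvPolynomial.X 0 : MvPolynomial (Fin 2) L) g
        + MvPolynomial.C (φ b) := by
    rw [map_add, map_add, OddPolyAux.map_polyaeval, OddPolyAux.map_polyaeval]
    simp [MvPolynomial.map_C]
    rfl
  rw [htarget]
  exact OddPolyAux.mv_irreducible g hdg hdL h2L hoddg (φ b) hbφ
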